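/- Model C is ergodic with unique invariant measure δ_{∘^ℤ}: the Dirac measure at the empty configuration ∘^ℤ is the unique probability measure ν on {∘,•}^ℤ with νF_C = ν, and for every probability measure ν on {∘,•}^ℤ, the iterates νF_C^n converge weakly to δ_{∘^ℤ} as n → ∞. (Corollary 5.3.) -/

import Mathlib

open MeasureTheory ProbabilityTheory Filter
open scoped BoundedContinuousFunction ENNReal NNReal

/-!
Conventions: a configuration of model C is `z : ℤ → Bool` (`false` = ∘ empty,
`true` = • particle); an update is `u : ℤ → Bool` (`true` = ↑, `false` = →).
The space `ℤ → Bool` carries the product topology (with `Bool` discrete) and the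
product (Borel) σ-algebra.
-/

/-- The local map `𝒞` of model C: the `i`-th coordinate of `𝒞(z,u)` is `•` iff
`(z_{i-1}z_i, u_{i-1}u_i) ∈ {(•∘, →⋅), (∘•, ⋅↑), (••, ↑↑), (••, →⋅)}`. -/
def modelC (z u : ℤ → Bool) : ℤ → Bool := fun i =>
  match z (i - 1), z i with
  | true, false => !u (i - 1)
  | false, true => u i
  | true, true => !u (i - 1) || u i
  | false, false => false

/-- `lam` is the product over `ℤ` of the uniform measure on the two-element update
alphabet `𝒰`. -/
def IsUniformProduct (lam : Measure (ℤ → Bool)) : Prop :=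
  IsProbabilityMeasure lam ∧
    ∀ (s : Finset ℤ) (f : ℤ → Bool),
      lam {u | ∀ i ∈ s, u i = f i} = (1 / 2 : ENNReal) ^ s.card

/-- `ν F_C`: the pushforward of `ν ⊗ lam` under `𝒞`. -/
noncomputable def FC (lam ν : Measure (ℤ → Bool)) : Measure (ℤ → Bool) :=
  Measure.map (fun p : (ℤ → Bool) × (ℤ → Bool) => modelC p.1 p.2) (ν.prod lam)

/-- The empty configuration `∘^ℤ`. -/
def emptyConfig : ℤ → Bool := fun _ => false


lemma modelC_eq (z u : ℤ → Bool) (i : ℤ) :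
    modelC z u i = ((z (i-1) && !u (i-1)) || (z i && u i)) := by
  cases h1 : z (i-1) <;> cases h2 : z i <;> simp [modelC, h1, h2]

lemma measurable_modelC : Measurable (fun p : (ℤ→Bool)×(ℤ→Bool) => modelC p.1 p.2) := by
  apply measurable_pi_lambda
  intro i
  have : (fun p : (ℤ→Bool)×(ℤ→Bool) => modelC p.1 p.2 i)
      = (fun q : Bool×Bool×Bool×Bool => ((q.1 && !q.2.2.1) || (q.2.1 && q.2.2.2))) ∘
        (fun p : (ℤ→Bool)×(ℤ→Bool) => (p.1 (i-1), p.1 i, p.2 (i-1), p.2 i)) := by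
    funext p; simp [modelC_eq, Function.comp]
  rw [this]
  apply (measurable_of_countable _).comp
  exact (((measurable_pi_apply _).comp measurable_fst)).prodMk
      ((((measurable_pi_apply _).comp measurable_fst)).prodMk
        ((((measurable_pi_apply _).comp measurable_snd)).prodMk
          (((measurable_pi_apply _).comp measurable_snd))))

def Ev (a b : ℤ) : Set (ℤ → Bool) := {z | ∃ j ∈ Set.Icc a b, z j = true}

lemma measurableSet_Ev (a b : ℤ) : MeasurableSet (Ev a b) := by
  have : Ev a b = ⋃ j ∈ Set.Icc a b, {z : ℤ → Bool | z j = true} := by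
    ext z; simp [Ev]
  rw [this]
  exact MeasurableSet.biUnion (Set.to_countable _)
    fun j _ => by
      have : {z : ℤ → Bool | z j = true} = (fun z : ℤ → Bool => z j) ⁻¹' {true} := by
        ext z; simp
      rw [this]; exact (measurable_pi_apply j) (measurableSet_singleton true)

lemma mem_Ev_modelC (a b : ℤ) (hab : a ≤ b) (z u : ℤ → Bool) :
    (modelC z u ∈ Ev a b) ↔
      ∃ k ∈ Set.Icc (if u (a-1) = true then a else a-1) (if u b = true then b else b-1),
        z k = true := by
  simp only [Ev, Set.mem_setOf_eq, Set.mem_Icc]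
  constructor
  · rintro ⟨j, ⟨hja, hjb⟩, hz⟩
    rw [modelC_eq] at hz
    have hz' : (z (j-1) = true ∧ u (j-1) = false) ∨ (z j = true ∧ u j = true) := by
      rcases (Bool.or_eq_true _ _).mp hz with h | h
      · left
        rcases (Bool.and_eq_true _ _).mp h with ⟨h1, h2⟩
        exact ⟨h1, by simpa using h2⟩
      · right; exact (Bool.and_eq_true _ _).mp h
    rcases hz' with ⟨h1, h2⟩ | ⟨h1, h2⟩
    · refine ⟨j-1, ⟨?_, ?_⟩, h1⟩
      · by_cases hja' : j = a
        · subst hja'; rw [h2]; simp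
        · split <;> omega
      · split <;> omega
    · refine ⟨j, ⟨?_, ?_⟩, h1⟩
      · split <;> omega
      · by_cases hjb' : j = b
        · subst hjb'; rw [h2]; simp
        · split <;> omega
  · rintro ⟨k, ⟨hk1, hk2⟩, hz⟩
    by_cases hk : k = a - 1
    · subst hk
      have hu : u (a-1) = false := by
        cases hu : u (a-1)
        · rfl
        · rw [hu] at hk1; simp at hk1
      exact ⟨a, ⟨le_refl a, hab⟩, by rw [modelC_eq]; simp [hz, hu]⟩
    · have ha : a ≤ k := by split at hk1 <;> omega
      cases hu : u k
      · have hkb : k ≤ b - 1 := by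
          cases hb : u b
          · rw [hb] at hk2; simp at hk2; omega
          · rw [hb] at hk2; simp at hk2
            rcases eq_or_lt_of_le hk2 with h | h
            · exfalso; rw [h] at hu; rw [hu] at hb; simp at hb
            · omega
        refine ⟨k+1, ⟨by omega, by omega⟩, ?_⟩
        rw [modelC_eq]
        have : k + 1 - 1 = k := by omega
        rw [this, hz, hu]; simp
      · have hkb : k ≤ b := by split at hk2 <;> omega
        exact ⟨k, ⟨ha, hkb⟩, by rw [modelC_eq]; simp [hz, hu]⟩

lemma preimage_Ev (a b : ℤ) (hab : a ≤ b) :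
    (fun p : (ℤ→Bool)×(ℤ→Bool) => modelC p.1 p.2) ⁻¹' (Ev a b)
      = ⋃ c : Bool × Bool,
          (Ev (if c.1 = true then a else a-1) (if c.2 = true then b else b-1)) ×ˢ
            {u : ℤ → Bool | u (a-1) = c.1 ∧ u b = c.2} := by
  ext p
  simp only [Set.mem_preimage, Set.mem_iUnion, Set.mem_prod, Set.mem_setOf_eq]
  rw [show (modelC p.1 p.2 ∈ Ev a b) ↔ _ from mem_Ev_modelC a b hab p.1 p.2]
  constructor
  · rintro ⟨k, hk, hz⟩
    exact ⟨(p.2 (a-1), p.2 b), ⟨k, hk, hz⟩, rfl, rfl⟩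
  · rintro ⟨⟨x, y⟩, ⟨k, hk, hz⟩, hx, hy⟩
    subst hx; subst hy
    exact ⟨k, hk, hz⟩

noncomputable def Qr : ℕ → ℕ → ℝ
  | 0, _ => 1
  | n+1, g => (1/4) * Qr n (g+1) + (1/2) * Qr n g + (1/4) * (if g = 0 then 0 else Qr n (g-1))

lemma Qr_nonneg : ∀ n g, 0 ≤ Qr n g := by
  intro n
  induction n with
  | zero => intro g; simp [Qr]
  | succ n ih =>
    intro g
    have h1 := ih (g+1); have h2 := ih g
    have h3 : (0:ℝ) ≤ if g = 0 then 0 else Qr n (g-1) := by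
      split
      · exact le_refl _
      · exact ih _
    simp only [Qr]; linarith

lemma measurableSet_pairSet (i j : ℤ) (x y : Bool) :
    MeasurableSet {u : ℤ → Bool | u i = x ∧ u j = y} := by
  have : {u : ℤ → Bool | u i = x ∧ u j = y}
      = ((fun u : ℤ → Bool => u i) ⁻¹' {x}) ∩ ((fun u : ℤ → Bool => u j) ⁻¹' {y}) := by
    ext; simp
  rw [this]
  exact (measurable_pi_apply i (measurableSet_singleton x)).inter
    (measurable_pi_apply j (measurableSet_singleton y))

lemma lam_pair {lam : Measure (ℤ → Bool)} (hlam : IsUniformProduct lam)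
    {i j : ℤ} (hij : i ≠ j) (x y : Bool) :
    lam {u : ℤ → Bool | u i = x ∧ u j = y} = ENNReal.ofReal (1/4) := by
  have key := hlam.2 {i, j} (fun k => if k = i then x else y)
  have hs : ({i, j} : Finset ℤ).card = 2 := by
    rw [Finset.card_insert_of_notMem (by simp [hij]), Finset.card_singleton]
  rw [hs] at key
  have hset : {u : ℤ → Bool | ∀ k ∈ ({i, j} : Finset ℤ), u k = (fun k => if k = i then x else y) k}
      = {u : ℤ → Bool | u i = x ∧ u j = y} := by
    ext u
    simp [Finset.mem_insert, hij, Ne.symm hij]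
  rw [hset] at key
  rw [key]
  rw [ENNReal.ofReal_div_of_pos (by norm_num)]
  norm_num
  rw [show ((2:ℝ≥0∞))⁻¹ ^ 2 = (2^2)⁻¹ by rw [ENNReal.inv_pow], show ((2:ℝ≥0∞))^2 = 4 by norm_num]

lemma Ev_empty (a b : ℤ) (h : b < a) : Ev a b = ∅ := by
  ext z; simp only [Ev, Set.mem_setOf_eq, Set.mem_Icc, Set.mem_empty_iff_false, iff_false]
  rintro ⟨j, ⟨h1, h2⟩, _⟩; omega

lemma FC_Ev_le {lam : Measure (ℤ → Bool)} (hlam : IsUniformProduct lam)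
    (μ : Measure (ℤ → Bool)) [IsProbabilityMeasure μ] {n : ℕ}
    (IH : ∀ a b : ℤ, a ≤ b → μ (Ev a b) ≤ ENNReal.ofReal (Qr n (b - a).toNat))
    (a b : ℤ) (hab : a ≤ b) :
    FC lam μ (Ev a b) ≤ ENNReal.ofReal (Qr (n+1) (b - a).toNat) := by
  haveI := hlam.1
  set g : ℕ := (b - a).toNat with hg
  rw [FC, Measure.map_apply measurable_modelC (measurableSet_Ev a b), preimage_Ev a b hab]
  rw [measure_iUnion ?hdisj ?hmeas]
  case hdisj =>
    intro c c' hcc'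
    simp only [Function.onFun]
    refine Set.disjoint_left.mpr ?_
    rintro ⟨z, u⟩ hp hp'
    simp only [Set.mem_prod, Set.mem_setOf_eq] at hp hp'
    apply hcc'
    ext
    · rw [← hp.2.1, ← hp'.2.1]
    · rw [← hp.2.2, ← hp'.2.2]
  case hmeas =>
    intro c
    exact (measurableSet_Ev _ _).prod (measurableSet_pairSet _ _ c.1 c.2)
  have hne : a - 1 ≠ b := by omega
  rw [tsum_fintype, Fintype.sum_prod_type]
  simp only [Fintype.sum_bool, Bool.false_eq_true, if_true, if_false, Measure.prod_prod,
    lam_pair hlam hne]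
  -- bound the four terms
  have hTT : μ (Ev a b) ≤ ENNReal.ofReal (Qr n g) := by
    have := IH a b hab; rwa [← hg] at this
  have hFT : μ (Ev (a-1) b) ≤ ENNReal.ofReal (Qr n (g+1)) := by
    have := IH (a-1) b (by omega)
    have hw : (b - (a-1)).toNat = g + 1 := by omega
    rwa [hw] at this
  have hFF : μ (Ev (a-1) (b-1)) ≤ ENNReal.ofReal (Qr n g) := by
    have := IH (a-1) (b-1) (by omega)
    have hw : (b - 1 - (a-1)).toNat = g := by omega
    rwa [hw] at this
  have hTF : μ (Ev a (b-1)) ≤ ENNReal.ofReal (if g = 0 then 0 else Qr n (g-1)) := by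
    by_cases h0 : g = 0
    · have hb : b - 1 < a := by omega
      rw [Ev_empty a (b-1) hb, h0]
      simp
    · have := IH a (b-1) (by omega)
      have hw : (b - 1 - a).toNat = g - 1 := by omega
      rw [hw] at this
      rwa [if_neg h0]
  have harith : ENNReal.ofReal (Qr n g) * ENNReal.ofReal (1/4)
      + ENNReal.ofReal (if g = 0 then 0 else Qr n (g-1)) * ENNReal.ofReal (1/4)
      + (ENNReal.ofReal (Qr n (g+1)) * ENNReal.ofReal (1/4)
      + ENNReal.ofReal (Qr n g) * ENNReal.ofReal (1/4))
      = ENNReal.ofReal (Qr (n+1) g) := by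
    have hx := Qr_nonneg n g
    have hy := Qr_nonneg n (g+1)
    have hz : (0:ℝ) ≤ if g = 0 then 0 else Qr n (g-1) := by
      split
      · exact le_refl _
      · exact Qr_nonneg _ _
    rw [← ENNReal.ofReal_mul hx, ← ENNReal.ofReal_mul hz, ← ENNReal.ofReal_mul hy,
      ← ENNReal.ofReal_add (by positivity) (by positivity),
      ← ENNReal.ofReal_add (by positivity) (by positivity),
      ← ENNReal.ofReal_add (by positivity) (by positivity)]
    congr 1
    simp only [Qr]
    ring
  calc μ (Ev a b) * ENNReal.ofReal (1/4) + μ (Ev a (b-1)) * ENNReal.ofReal (1/4)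
        + (μ (Ev (a-1) b) * ENNReal.ofReal (1/4) + μ (Ev (a-1) (b-1)) * ENNReal.ofReal (1/4))
      ≤ ENNReal.ofReal (Qr n g) * ENNReal.ofReal (1/4)
        + ENNReal.ofReal (if g = 0 then 0 else Qr n (g-1)) * ENNReal.ofReal (1/4)
        + (ENNReal.ofReal (Qr n (g+1)) * ENNReal.ofReal (1/4)
        + ENNReal.ofReal (Qr n g) * ENNReal.ofReal (1/4)) := by
        gcongr
    _ = ENNReal.ofReal (Qr (n+1) g) := harith

lemma Qr_succ (n g : ℕ) : Qr (n+1) g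
    = (1/4) * Qr n (g+1) + (1/2) * Qr n g + (1/4) * (if g = 0 then 0 else Qr n (g-1)) := rfl

lemma FC_isProb {lam : Measure (ℤ → Bool)} (hlam : IsUniformProduct lam)
    (ν : Measure (ℤ → Bool)) [IsProbabilityMeasure ν] : IsProbabilityMeasure (FC lam ν) := by
  haveI := hlam.1
  rw [FC]
  exact Measure.isProbabilityMeasure_map measurable_modelC.aemeasurable

lemma iter_isProb {lam : Measure (ℤ → Bool)} (hlam : IsUniformProduct lam)
    (ν : Measure (ℤ → Bool)) [IsProbabilityMeasure ν] :
    ∀ n, IsProbabilityMeasure ((FC lam)^[n] ν) := by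
  intro n
  induction n with
  | zero => simpa using ‹IsProbabilityMeasure ν›
  | succ n ih =>
    rw [Function.iterate_succ_apply']
    haveI := ih
    exact FC_isProb hlam _

lemma iter_Ev_le {lam : Measure (ℤ → Bool)} (hlam : IsUniformProduct lam)
    (ν : Measure (ℤ → Bool)) [IsProbabilityMeasure ν] :
    ∀ n (a b : ℤ), a ≤ b → ((FC lam)^[n] ν) (Ev a b) ≤ ENNReal.ofReal (Qr n ((b-a).toNat)) := by
  intro n
  induction n with
  | zero =>
    intro a b hab
    simp only [Function.iterate_zero, id_eq, Qr]
    rw [ENNReal.ofReal_one]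
    exact prob_le_one
  | succ n ih =>
    intro a b hab
    rw [Function.iterate_succ_apply']
    haveI := iter_isProb hlam ν n
    exact FC_Ev_le hlam _ ih a b hab

lemma iter_single {lam : Measure (ℤ → Bool)} (hlam : IsUniformProduct lam)
    (ν : Measure (ℤ → Bool)) [IsProbabilityMeasure ν] (n : ℕ) (i : ℤ) :
    ((FC lam)^[n] ν) {z | z i = true} ≤ ENNReal.ofReal (Qr n 0) := by
  have h : {z : ℤ → Bool | z i = true} = Ev i i := by ext z; simp [Ev]
  rw [h]
  simpa using iter_Ev_le hlam ν n i i le_rfl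

lemma Qr_le_one : ∀ n g, Qr n g ≤ 1 := by
  intro n
  induction n with
  | zero => intro g; simp [Qr]
  | succ n ih =>
    intro g
    rw [Qr_succ]
    have h1 := ih (g+1); have h2 := ih g
    have h3 : (if g = 0 then (0:ℝ) else Qr n (g-1)) ≤ 1 := by
      split
      · norm_num
      · exact ih _
    linarith

lemma Qr_succ_le : ∀ n g, Qr (n+1) g ≤ Qr n g := by
  intro n
  induction n with
  | zero =>
    intro g
    rw [Qr_succ]
    have := Qr_le_one 0 g
    simp only [Qr]
    split <;> norm_num
  | succ n ih =>
    intro g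
    have e1 := Qr_succ (n+1) g
    have e2 := Qr_succ n g
    have h1 := ih (g+1); have h2 := ih g
    have h3 : (if g = 0 then (0:ℝ) else Qr (n+1) (g-1)) ≤ (if g = 0 then (0:ℝ) else Qr n (g-1)) := by
      split
      · exact le_refl _
      · exact ih _
    linarith [e1, e2]

lemma Qr_anti (g : ℕ) : Antitone (fun n => Qr n g) :=
  antitone_nat_of_succ_le (fun n => Qr_succ_le n g)

noncomputable def Lr (g : ℕ) : ℝ := ⨅ n, Qr n g

lemma Lr_nonneg (g : ℕ) : 0 ≤ Lr g :=
  le_ciInf (fun n => Qr_nonneg n g)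

lemma Lr_le_one (g : ℕ) : Lr g ≤ 1 := by
  have := ciInf_le (⟨(0:ℝ), by rintro x ⟨n, rfl⟩; exact Qr_nonneg n g⟩ : BddBelow (Set.range fun n => Qr n g)) 0
  calc Lr g ≤ Qr 0 g := this
    _ = 1 := by simp [Qr]

lemma tendsto_Qr (g : ℕ) : Tendsto (fun n => Qr n g) atTop (nhds (Lr g)) := by
  apply tendsto_atTop_ciInf (Qr_anti g)
  exact ⟨(0:ℝ), by rintro x ⟨n, rfl⟩; exact Qr_nonneg n g⟩

lemma Lr_rec (g : ℕ) :
    Lr g = (1/4) * Lr (g+1) + (1/2) * Lr g + (1/4) * (if g = 0 then 0 else Lr (g-1)) := by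
  have h1 : Tendsto (fun n => Qr (n+1) g) atTop (nhds (Lr g)) :=
    (tendsto_Qr g).comp (tendsto_add_atTop_nat 1)
  have h2 : Tendsto (fun n => (1/4) * Qr n (g+1) + (1/2) * Qr n g
      + (1/4) * (if g = 0 then 0 else Qr n (g-1))) atTop
      (nhds ((1/4) * Lr (g+1) + (1/2) * Lr g + (1/4) * (if g = 0 then 0 else Lr (g-1)))) := by
    apply Tendsto.add
    apply Tendsto.add
    · exact (tendsto_Qr (g+1)).const_mul _
    · exact (tendsto_Qr g).const_mul _
    · by_cases h0 : g = 0
      · simp only [h0, if_true]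
        simpa using tendsto_const_nhds
      · simp only [if_neg h0]
        exact (tendsto_Qr (g-1)).const_mul _
  have h3 : (fun n => Qr (n+1) g) = (fun n => (1/4) * Qr n (g+1) + (1/2) * Qr n g
      + (1/4) * (if g = 0 then 0 else Qr n (g-1))) := by
    funext n; exact Qr_succ n g
  rw [h3] at h1
  exact tendsto_nhds_unique h1 h2

lemma Lr_one : Lr 1 = 2 * Lr 0 := by
  have h := Lr_rec 0
  norm_num at h
  linarith

lemma Lr_step (g : ℕ) : Lr (g+2) = 2 * Lr (g+1) - Lr g := by
  have h := Lr_rec (g+1)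
  rw [if_neg (by omega : ¬(g+1 = 0))] at h
  have he : g + 1 - 1 = g := rfl
  rw [he] at h
  linarith

lemma Lr_linear : ∀ g, Lr g = ((g:ℝ)+1) * Lr 0 := by
  intro g
  induction g using Nat.strong_induction_on with
  | _ g ih =>
    match g with
    | 0 => norm_num
    | 1 => rw [Lr_one]; norm_num
    | (g+2) =>
      rw [Lr_step g, ih (g+1) (by omega), ih g (by omega)]
      push_cast
      ring

lemma Lr_zero : Lr 0 = 0 := by
  have h1 : 0 ≤ Lr 0 := Lr_nonneg 0
  have h2 : ∀ g : ℕ, ((g:ℝ)+1) * Lr 0 ≤ 1 := fun g => by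
    rw [← Lr_linear g]; exact Lr_le_one g
  by_contra h
  have hpos : 0 < Lr 0 := lt_of_le_of_ne h1 (Ne.symm h)
  obtain ⟨g, hg⟩ := exists_nat_gt (1 / Lr 0)
  have h3 := h2 g
  have h4 : 1 / Lr 0 * Lr 0 = 1 := div_mul_cancel₀ 1 (ne_of_gt hpos)
  nlinarith

lemma tendsto_Qr_zero : Tendsto (fun n => Qr n 0) atTop (nhds 0) := by
  have := tendsto_Qr 0
  rwa [Lr_zero] at this

lemma cylinder_approx (f : (ℤ → Bool) →ᵇ ℝ) {ε : ℝ} (hε : 0 < ε) :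
    ∃ I : Finset ℤ, ∀ z : ℤ → Bool, (∀ i ∈ I, z i = false) → |f z - f emptyConfig| < ε := by
  have hcont : ContinuousAt f emptyConfig := f.continuous.continuousAt
  have hpre : f ⁻¹' Metric.ball (f emptyConfig) ε ∈ nhds emptyConfig :=
    hcont (Metric.ball_mem_nhds _ hε)
  rw [nhds_pi, Filter.mem_pi] at hpre
  obtain ⟨I, hIfin, t, ht, hsub⟩ := hpre
  refine ⟨hIfin.toFinset, fun z hz => ?_⟩
  have hmem : z ∈ I.pi t := by
    intro i hi
    have h1 : z i = false := hz i (hIfin.mem_toFinset.mpr hi)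
    have h2 : emptyConfig i ∈ t i := mem_of_mem_nhds (ht i)
    rw [h1]
    exact h2
  have := hsub hmem
  simp only [Set.mem_preimage, Metric.mem_ball, Real.dist_eq] at this
  exact this

lemma cyl_compl_le {lam : Measure (ℤ → Bool)} (hlam : IsUniformProduct lam)
    (ν : Measure (ℤ → Bool)) [IsProbabilityMeasure ν] (n : ℕ) (I : Finset ℤ) :
    ((FC lam)^[n] ν) ({z : ℤ → Bool | ∀ i ∈ I, z i = false}ᶜ)
      ≤ ENNReal.ofReal ((I.card : ℝ) * Qr n 0) := by
  have hsub : {z : ℤ → Bool | ∀ i ∈ I, z i = false}ᶜ ⊆ ⋃ i ∈ I, {z : ℤ → Bool | z i = true} := by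
    intro z hz
    simp only [Set.mem_compl_iff, Set.mem_setOf_eq, not_forall] at hz
    obtain ⟨i, hi, hzi⟩ := hz
    simp only [Set.mem_iUnion]
    exact ⟨i, hi, by simpa using hzi⟩
  calc ((FC lam)^[n] ν) ({z : ℤ → Bool | ∀ i ∈ I, z i = false}ᶜ)
      ≤ ((FC lam)^[n] ν) (⋃ i ∈ I, {z : ℤ → Bool | z i = true}) := measure_mono hsub
    _ ≤ ∑ i ∈ I, ((FC lam)^[n] ν) {z : ℤ → Bool | z i = true} := measure_biUnion_finset_le _ _
    _ ≤ ∑ _i ∈ I, ENNReal.ofReal (Qr n 0) :=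
        Finset.sum_le_sum (fun i _ => iter_single hlam ν n i)
    _ = (I.card : ℝ≥0∞) * ENNReal.ofReal (Qr n 0) := by
        rw [Finset.sum_const, nsmul_eq_mul]
    _ = ENNReal.ofReal ((I.card : ℝ) * Qr n 0) := by
        rw [ENNReal.ofReal_mul (by positivity), ENNReal.ofReal_natCast]

lemma measurableSet_cyl (I : Finset ℤ) :
    MeasurableSet {z : ℤ → Bool | ∀ i ∈ I, z i = false} := by
  have : {z : ℤ → Bool | ∀ i ∈ I, z i = false} = ⋂ i ∈ I, (fun z : ℤ → Bool => z i) ⁻¹' {false} := by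
    ext z; simp
  rw [this]
  exact MeasurableSet.biInter (Set.to_countable _)
    (fun i _ => measurable_pi_apply i (measurableSet_singleton false))

lemma main_tendsto {lam : Measure (ℤ → Bool)} (hlam : IsUniformProduct lam)
    (ν : Measure (ℤ → Bool)) [IsProbabilityMeasure ν] (f : (ℤ → Bool) →ᵇ ℝ) :
    Tendsto (fun n : ℕ => ∫ x, f x ∂((FC lam)^[n] ν)) atTop (nhds (f emptyConfig)) := by
  rw [Metric.tendsto_atTop]
  intro ε hε
  obtain ⟨I, hI⟩ := cylinder_approx f (half_pos hε)
  set K : ℝ := 2 * ‖f‖ * I.card with hK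
  have hKnn : 0 ≤ K := by positivity
  set δ : ℝ := (ε/2) / (K + 1) with hδ
  have hδpos : 0 < δ := by positivity
  obtain ⟨N, hN⟩ := (Metric.tendsto_atTop.mp tendsto_Qr_zero) δ hδpos
  refine ⟨N, fun n hn => ?_⟩
  set μn := (FC lam)^[n] ν with hμn
  haveI : IsProbabilityMeasure μn := iter_isProb hlam ν n
  set C : Set (ℤ → Bool) := {z : ℤ → Bool | ∀ i ∈ I, z i = false} with hC
  have hCmeas : MeasurableSet C := measurableSet_cyl I
  -- pointwise bound
  have hpt : ∀ z, |f z - f emptyConfig| ≤ ε/2 + Cᶜ.indicator (fun _ => 2 * ‖f‖) z := by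
    intro z
    by_cases hz : z ∈ C
    · rw [Set.indicator_of_notMem (by simpa using hz)]
      have := hI z hz
      linarith
    · rw [Set.indicator_of_mem (by simpa using hz)]
      have h1 : |f z| ≤ ‖f‖ := f.norm_coe_le_norm z
      have h2 : |f emptyConfig| ≤ ‖f‖ := f.norm_coe_le_norm emptyConfig
      have := abs_sub (f z) (f emptyConfig)
      have habs : |f z - f emptyConfig| ≤ |f z| + |f emptyConfig| := abs_sub _ _
      linarith
  have hint1 : ∫ x, (f x - f emptyConfig) ∂μn = (∫ x, f x ∂μn) - f emptyConfig := by
    rw [integral_sub (f.integrable μn) (integrable_const _), integral_const]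
    simp [measure_univ]
  have hIabs : Integrable (fun z => |f z - f emptyConfig|) μn :=
    ((f.integrable μn).sub (integrable_const _)).abs
  have hIrhs : Integrable (fun z => ε/2 + Cᶜ.indicator (fun _ => 2 * ‖f‖) z) μn := by
    exact (integrable_const _).add ((integrable_const _).indicator hCmeas.compl)
  have hint2 : ∫ z, (ε/2 + Cᶜ.indicator (fun _ => 2 * ‖f‖) z) ∂μn
      = ε/2 + (μn Cᶜ).toReal * (2 * ‖f‖) := by
    rw [integral_add (integrable_const _) ((integrable_const _).indicator hCmeas.compl),
      integral_const, integral_indicator_const _ hCmeas.compl]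
    simp [measure_univ, smul_eq_mul, measureReal_def]
  have hcompl : (μn Cᶜ).toReal ≤ (I.card : ℝ) * Qr n 0 := by
    apply ENNReal.toReal_le_of_le_ofReal (mul_nonneg (by positivity) (Qr_nonneg n 0))
    exact cyl_compl_le hlam ν n I
  have hQr : Qr n 0 < δ := by
    have := hN n hn
    rwa [Real.dist_eq, sub_zero, abs_of_nonneg (Qr_nonneg n 0)] at this
  have key : |(∫ x, f x ∂μn) - f emptyConfig| < ε := by
    rw [← hint1]
    calc |∫ x, (f x - f emptyConfig) ∂μn|
        ≤ ∫ x, |f x - f emptyConfig| ∂μn := by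
          simpa [Real.norm_eq_abs] using
            norm_integral_le_integral_norm (fun x => f x - f emptyConfig) (μ := μn)
      _ ≤ ∫ z, (ε/2 + Cᶜ.indicator (fun _ => 2 * ‖f‖) z) ∂μn :=
          integral_mono hIabs hIrhs (fun z => hpt z)
      _ = ε/2 + (μn Cᶜ).toReal * (2 * ‖f‖) := hint2
      _ < ε := by
          have h1 : (μn Cᶜ).toReal * (2 * ‖f‖) ≤ ((I.card : ℝ) * Qr n 0) * (2 * ‖f‖) := by
            apply mul_le_mul_of_nonneg_right hcompl (by positivity)
          have h2 : ((I.card : ℝ) * Qr n 0) * (2 * ‖f‖) = K * Qr n 0 := by rw [hK]; ring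
          have h3 : K * Qr n 0 ≤ K * δ :=
            mul_le_mul_of_nonneg_left (le_of_lt hQr) hKnn
          have h4 : K * δ < ε / 2 := by
            rw [hδ]
            rw [div_eq_mul_inv]
            have : K * ((ε/2) * (K+1)⁻¹) = (ε/2) * (K * (K+1)⁻¹) := by ring
            rw [this]
            have hlt : K * (K+1)⁻¹ < 1 := by
              rw [mul_inv_lt_iff₀ (by positivity)]
              linarith
            nlinarith [half_pos hε]
          linarith
  rw [Real.dist_eq]
  exact key

lemma FC_dirac {lam : Measure (ℤ → Bool)} (hlam : IsUniformProduct lam) :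
    FC lam (Measure.dirac emptyConfig) = Measure.dirac emptyConfig := by
  haveI := hlam.1
  rw [FC, Measure.dirac_prod, Measure.map_map measurable_modelC measurable_prodMk_left]
  have h : ((fun p : (ℤ→Bool)×(ℤ→Bool) => modelC p.1 p.2) ∘ (Prod.mk emptyConfig))
      = fun _ => emptyConfig := by
    funext u
    funext i
    rfl
  rw [h, Measure.map_const]
  simp

/-- Corollary 5.3: model C is ergodic with unique invariant measure
`δ_{∘^ℤ}`: the Dirac measure at `∘^ℤ` is invariant, it is the unique invariant
probability measure, and for every probability measure `ν` the iterates `ν F_C^n`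
converge weakly to `δ_{∘^ℤ}`. -/
theorem modelC_ergodic (lam : Measure (ℤ → Bool)) (hlam : IsUniformProduct lam) :
    FC lam (Measure.dirac emptyConfig) = Measure.dirac emptyConfig ∧
    (∀ ν : Measure (ℤ → Bool), IsProbabilityMeasure ν → FC lam ν = ν →
      ν = Measure.dirac emptyConfig) ∧
    (∀ ν : Measure (ℤ → Bool), IsProbabilityMeasure ν →
      ∀ f : BoundedContinuousFunction (ℤ → Bool) ℝ,
        Tendsto (fun n : ℕ => ∫ x, f x ∂((FC lam)^[n] ν)) atTop
          (nhds (∫ x, f x ∂(Measure.dirac emptyConfig)))) := by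
  haveI := hlam.1
  refine ⟨FC_dirac hlam, ?_, ?_⟩
  · intro ν hν hinv
    haveI := hν
    have hiter : ∀ n, (FC lam)^[n] ν = ν := by
      intro n
      induction n with
      | zero => rfl
      | succ n ih => rw [Function.iterate_succ_apply', ih, hinv]
    have hint : ∀ f : (ℤ → Bool) →ᵇ ℝ, ∫ x, f x ∂ν = f emptyConfig := by
      intro f
      have h := main_tendsto hlam ν f
      simp only [hiter] at h
      exact tendsto_nhds_unique tendsto_const_nhds h
    apply ext_of_forall_lintegral_eq_of_IsFiniteMeasure
    intro f
    have lip : LipschitzWith 1 ((↑) : NNReal → ℝ) := isometry_subtype_coe.lipschitz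
    have hreal : ∫ x, (f x : ℝ) ∂ν = (f emptyConfig : ℝ) :=
      hint (BoundedContinuousFunction.comp _ lip f)
    have h1 : (∫⁻ x, (f x : ℝ≥0∞) ∂ν).toReal = ∫ x, (f x : ℝ) ∂ν :=
      f.toReal_lintegral_coe_eq_integral ν
    have h2 : ∫⁻ x, (f x : ℝ≥0∞) ∂(Measure.dirac emptyConfig) = (f emptyConfig : ℝ≥0∞) :=
      lintegral_dirac _ _
    rw [h2]
    have hfin : ∫⁻ x, (f x : ℝ≥0∞) ∂ν ≠ ⊤ := (f.lintegral_lt_top_of_nnreal ν).ne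
    have h3 : (∫⁻ x, (f x : ℝ≥0∞) ∂ν).toReal = ((f emptyConfig : ℝ≥0∞)).toReal := by
      rw [h1, hreal]; simp
    exact (ENNReal.toReal_eq_toReal_iff' hfin (by simp)).mp h3
  · intro ν hν f
    haveI := hν
    rw [integral_dirac]
    exact main_tendsto hlam ν f
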